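/- (Proposition 2.1, part on G, for κ ≤ 0) Let κ ≤ 0, let n ≥ 2 be an integer, and let F solve the ODE of the paper with F(0) = 0, F'(0) = 1. Define G(r) := 2 F(r) F'(r) + (n−1)(sn_κ'(r)/sn_κ(r)) F(r)². Then G is non-negative and non-decreasing on (0,∞). -/

import Mathlib

open Set

/-- The comparison sine function `sn_κ` for `κ ≤ 0`: `sn_0(t) = t` and
`sn_κ(t) = sinh(√(-κ) t)/√(-κ)` for `κ < 0`. -/
noncomputable def snk (κ : ℝ) (t : ℝ) : ℝ :=
  if κ = 0 then t else Real.sinh (Real.sqrt (-κ) * t) / Real.sqrt (-κ)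

/-- The derivative of `snk`. -/
noncomputable def snd (κ : ℝ) (t : ℝ) : ℝ :=
  if κ = 0 then 1 else Real.cosh (Real.sqrt (-κ) * t)

lemma snk_hasDerivAt (κ : ℝ) (hκ : κ ≤ 0) (t : ℝ) :
    HasDerivAt (snk κ) (snd κ t) t := by
  by_cases h : κ = 0
  · subst h
    have h1 : snk 0 = fun t : ℝ => t := funext fun t => by simp [snk]
    have h2 : snd 0 t = 1 := by simp [snd]
    rw [h1, h2]
    exact hasDerivAt_id t
  · have hκ' : κ < 0 := lt_of_le_of_ne hκ h
    have hc : 0 < Real.sqrt (-κ) := Real.sqrt_pos.mpr (by linarith)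
    have hk1 : snk κ = fun t : ℝ => Real.sinh (Real.sqrt (-κ) * t) / Real.sqrt (-κ) :=
      funext fun t => by simp [snk, h]
    have hk2 : snd κ t = Real.cosh (Real.sqrt (-κ) * t) := by simp [snd, h]
    rw [hk1, hk2]
    have h1 : HasDerivAt (fun t : ℝ => Real.sinh (Real.sqrt (-κ) * t))
        (Real.cosh (Real.sqrt (-κ) * t) * Real.sqrt (-κ)) t := by
      have := (Real.hasDerivAt_sinh (Real.sqrt (-κ) * t)).comp t
        ((hasDerivAt_id t).const_mul (Real.sqrt (-κ)))
      exact this.congr_deriv (by simp)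
    have := h1.div_const (Real.sqrt (-κ))
    refine this.congr_deriv ?_
    field_simp

lemma snd_hasDerivAt (κ : ℝ) (hκ : κ ≤ 0) (t : ℝ) :
    HasDerivAt (snd κ) (-κ * snk κ t) t := by
  by_cases h : κ = 0
  · subst h
    have h1 : snd 0 = fun _ : ℝ => (1:ℝ) := funext fun t => by simp [snd]
    rw [h1, show -(0:ℝ) * snk 0 t = 0 by ring]
    exact hasDerivAt_const t 1
  · have hκ' : κ < 0 := lt_of_le_of_ne hκ h
    have hc : 0 < Real.sqrt (-κ) := Real.sqrt_pos.mpr (by linarith)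
    have hc2 : Real.sqrt (-κ) ^ 2 = -κ := Real.sq_sqrt (by linarith)
    have hk1 : snd κ = fun t : ℝ => Real.cosh (Real.sqrt (-κ) * t) :=
      funext fun t => by simp [snd, h]
    have hk2 : snk κ t = Real.sinh (Real.sqrt (-κ) * t) / Real.sqrt (-κ) := by simp [snk, h]
    rw [hk1, hk2]
    have h1 : HasDerivAt (fun t : ℝ => Real.cosh (Real.sqrt (-κ) * t))
        (Real.sinh (Real.sqrt (-κ) * t) * Real.sqrt (-κ)) t := by
      have := (Real.hasDerivAt_cosh (Real.sqrt (-κ) * t)).comp t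
        ((hasDerivAt_id t).const_mul (Real.sqrt (-κ)))
      exact this.congr_deriv (by simp)
    refine h1.congr_deriv ?_
    field_simp
    linear_combination (Real.sinh (Real.sqrt (-κ) * t)) * hc2

lemma snk_pos (κ : ℝ) (hκ : κ ≤ 0) {t : ℝ} (ht : 0 < t) : 0 < snk κ t := by
  by_cases h : κ = 0
  · simpa [snk, h]
  · have hκ' : κ < 0 := lt_of_le_of_ne hκ h
    have hc : 0 < Real.sqrt (-κ) := Real.sqrt_pos.mpr (by linarith)
    simp only [snk, h, if_false]
    exact div_pos (by positivity) hc

lemma snd_pos (κ : ℝ) (t : ℝ) : 0 < snd κ t := by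
  by_cases h : κ = 0
  · simp [snd, h]
  · simp only [snd, h, if_false]
    exact Real.cosh_pos _

lemma snk_pyth (κ : ℝ) (hκ : κ ≤ 0) (t : ℝ) :
    (snd κ t) ^ 2 + κ * (snk κ t) ^ 2 = 1 := by
  by_cases h : κ = 0
  · simp [snd, snk, h]
  · have hκ' : κ < 0 := lt_of_le_of_ne hκ h
    have hc : 0 < Real.sqrt (-κ) := Real.sqrt_pos.mpr (by linarith)
    have hc2 : Real.sqrt (-κ) ^ 2 = -κ := Real.sq_sqrt (by linarith)
    simp only [snd, snk, h, if_false]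
    have := Real.cosh_sq_sub_sinh_sq (Real.sqrt (-κ) * t)
    field_simp
    nlinarith [this, hc2]

/-- Proposition 2.1 (part on `G`), for `κ ≤ 0`: the function
`G(r) = (F²)'(r) + (n-1)(sn_κ'/sn_κ)(r) F(r)²` is non-negative and non-decreasing on `(0,∞)`. -/
theorem G_nonneg_monotone
    (κ : ℝ) (hκ : κ ≤ 0) (n : ℕ) (hn : 2 ≤ n) (F : ℝ → ℝ)
    (hFc : ContinuousOn F (Ici 0))
    (hF2 : ContDiffOn ℝ 2 F (Ioi 0))
    (hF0 : F 0 = 0)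
    (hF'0 : HasDerivWithinAt F 1 (Ici 0) 0)
    (hODE : ∀ r > 0, deriv (deriv F) r
      + ((n : ℝ) - 1) * (deriv (snk κ) r / snk κ r) * deriv F r
      - (((n : ℝ) - 1) / (snk κ r) ^ 2) * F r = 0)
    (hFpos : ∀ r > 0, 0 < F r) (hF'pos : ∀ r > 0, 0 < deriv F r)
    (G : ℝ → ℝ)
    (hG : ∀ r, G r = 2 * F r * deriv F r + ((n : ℝ) - 1) * (deriv (snk κ) r / snk κ r) * (F r) ^ 2) :
    (∀ r > 0, 0 ≤ G r) ∧ MonotoneOn G (Ioi 0) := by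
  have hder : ∀ t, deriv (snk κ) t = snd κ t := fun t => (snk_hasDerivAt κ hκ t).deriv
  have hn1 : (1 : ℝ) ≤ (n : ℝ) - 1 := by
    have : (2 : ℝ) ≤ (n : ℝ) := by exact_mod_cast hn
    linarith
  have hGeq : ∀ r, G r
      = 2 * F r * deriv F r + ((n : ℝ) - 1) * (snd κ r / snk κ r) * (F r) ^ 2 := by
    intro r; rw [hG, hder]
  -- nonnegativity
  have hnonneg : ∀ r > 0, 0 ≤ G r := by
    intro r hr
    rw [hGeq]
    have h1 := hFpos r hr
    have h2 := hF'pos r hr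
    have h3 := snk_pos κ hκ hr
    have h4 := snd_pos κ r
    have ha : (0:ℝ) ≤ 2 * F r * deriv F r := by positivity
    have hb : (0:ℝ) ≤ ((n : ℝ) - 1) * (snd κ r / snk κ r) * (F r) ^ 2 := by
      apply mul_nonneg (mul_nonneg (by linarith) (le_of_lt (div_pos h4 h3)))
      positivity
    linarith
  refine ⟨hnonneg, ?_⟩
  -- differentiability facts
  have hFdiff : ∀ r ∈ Ioi (0:ℝ), HasDerivAt F (deriv F r) r := by
    intro r hr
    exact ((hF2.differentiableOn (by norm_num)).differentiableAt
      (isOpen_Ioi.mem_nhds hr)).hasDerivAt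
  have hF'cd : ContDiffOn ℝ 1 (deriv F) (Ioi 0) := by
    have := hF2.deriv_of_isOpen (m := 1) isOpen_Ioi (by norm_num)
    exact this
  have hF'diff : ∀ r ∈ Ioi (0:ℝ), HasDerivAt (deriv F) (deriv (deriv F) r) r := by
    intro r hr
    exact ((hF'cd.differentiableOn (by norm_num)).differentiableAt
      (isOpen_Ioi.mem_nhds hr)).hasDerivAt
  -- key derivative computation
  have key : ∀ r ∈ Ioi (0:ℝ), HasDerivAt G
      (2 * (deriv F r) ^ 2 + ((n : ℝ) - 1) * (F r) ^ 2 / (snk κ r) ^ 2) r := by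
    intro r hr
    have hr0 : (0:ℝ) < r := hr
    have hS := snk_pos κ hκ hr0
    have hSne : snk κ r ≠ 0 := ne_of_gt hS
    have hF := hFdiff r hr
    have hF' := hF'diff r hr
    have hS1 := snk_hasDerivAt κ hκ r
    have hD1 := snd_hasDerivAt κ hκ r
    have hquot : HasDerivAt (fun t => snd κ t / snk κ t)
        ((-κ * snk κ r * snk κ r - snd κ r * snd κ r) / (snk κ r) ^ 2) r :=
      hD1.div hS1 hSne
    have hterm1 : HasDerivAt (fun t => 2 * F t * deriv F t)
        (2 * deriv F r * deriv F r + 2 * F r * deriv (deriv F) r) r :=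
      (hF.const_mul 2).mul hF'
    have hpow : HasDerivAt (fun t => (F t) ^ 2) (2 * F r ^ 1 * deriv F r) r := hF.pow 2
    have hterm2 : HasDerivAt (fun t => ((n : ℝ) - 1) * (snd κ t / snk κ t) * (F t) ^ 2)
        (((n : ℝ) - 1) * ((-κ * snk κ r * snk κ r - snd κ r * snd κ r) / (snk κ r) ^ 2)
            * (F r) ^ 2
          + ((n : ℝ) - 1) * (snd κ r / snk κ r) * (2 * F r ^ 1 * deriv F r)) r :=
      (hquot.const_mul ((n : ℝ) - 1)).mul hpow
    have hGfun : G = fun t =>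
        2 * F t * deriv F t + ((n : ℝ) - 1) * (snd κ t / snk κ t) * (F t) ^ 2 :=
      funext hGeq
    have hsum := hterm1.add hterm2
    rw [hGfun]
    refine hsum.congr_deriv ?_
    -- use the ODE and the pythagorean identity
    have hODEr := hODE r hr0
    rw [hder] at hODEr
    have hF'' : deriv (deriv F) r
        = ((n : ℝ) - 1) / (snk κ r) ^ 2 * F r
          - ((n : ℝ) - 1) * (snd κ r / snk κ r) * deriv F r := by linarith
    have hp := snk_pyth κ hκ r
    rw [hF'']
    field_simp
    linear_combination (-(F r ^ 2) * ((n:ℝ) - 1)) * hp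
  -- monotonicity
  have hcont : ContinuousOn G (Ioi 0) := fun r hr =>
    ((key r hr).continuousAt).continuousWithinAt
  have hmono : StrictMonoOn G (Ioi 0) := by
    apply strictMonoOn_of_deriv_pos (convex_Ioi 0) hcont
    intro r hr
    rw [interior_Ioi] at hr
    rw [(key r hr).deriv]
    have h1 := hF'pos r hr
    have h2 := hFpos r hr
    have h3 := snk_pos κ hκ hr
    have ha : (0:ℝ) < 2 * (deriv F r) ^ 2 := by positivity
    have hb : (0:ℝ) ≤ ((n : ℝ) - 1) * (F r) ^ 2 / (snk κ r) ^ 2 := by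
      apply div_nonneg (mul_nonneg (by linarith) (by positivity)) (by positivity)
    linarith
  exact hmono.monotoneOn
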